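/- Let a, b, η, ε, λ_L, λ_M be real numbers with a ≠ 0, b ≠ 0, λ_L + η·a ≠ 0, λ_M + η·a ≠ 0, λ_L + ε·b ≠ 0 and λ_M + ε·b ≠ 0. Consider the linear system in the unknowns (X_L, X_M): X_L/a − (1 + X_L)·η/(λ_L + η·a) = X_M/a − (1 + X_M)·η/(λ_M + η·a), X_L/b − (1 + X_L)·ε/(λ_L + ε·b) = X_M/b − (1 + X_M)·ε/(λ_M + ε·b). Then: (i) (X_L, X_M) = (−1, −1) is a solution; (ii) the determinant of the coefficient matrix of the system equals −λ_L·λ_M·(λ_M − λ_L)·(ε·b − η·a) / ( a·b·(λ_L + η·a)·(λ_M + η·a)·(λ_L + ε·b)·(λ_M + ε·b) ); (iii) if moreover λ_L ≠ 0, λ_M ≠ 0, λ_L ≠ λ_M and ε·b ≠ η·a, then (−1, −1) is the unique solution. -/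

import Mathlib

/-- system (4.4) of Lemma 4.1 for the Doi–Kumagai model:
`(X_L, X_M) = (-1, -1)` solves the connection system, the determinant of its
coefficient matrix has the stated value, and in the nondegenerate case the
solution is unique. -/
theorem stmt17 (a b η ε lamL lamM : ℝ)
    (ha : a ≠ 0) (hb : b ≠ 0)
    (hLa : lamL + η * a ≠ 0) (hMa : lamM + η * a ≠ 0)
    (hLb : lamL + ε * b ≠ 0) (hMb : lamM + ε * b ≠ 0)
    (Sol : ℝ → ℝ → Prop)
    (hSol : ∀ XL XM : ℝ, Sol XL XM ↔
      (XL / a - (1 + XL) * η / (lamL + η * a) = XM / a - (1 + XM) * η / (lamM + η * a) ∧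
        XL / b - (1 + XL) * ε / (lamL + ε * b) = XM / b - (1 + XM) * ε / (lamM + ε * b)))
    (Λ : Matrix (Fin 2) (Fin 2) ℝ)
    (hΛ : Λ = !![1 / a - η / (lamL + η * a), -(1 / a - η / (lamM + η * a));
                 1 / b - ε / (lamL + ε * b), -(1 / b - ε / (lamM + ε * b))]) :
    Sol (-1) (-1) ∧
    Λ.det = -lamL * lamM * (lamM - lamL) * (ε * b - η * a) /
      (a * b * (lamL + η * a) * (lamM + η * a) * (lamL + ε * b) * (lamM + ε * b)) ∧
    (lamL ≠ 0 → lamM ≠ 0 → lamL ≠ lamM → ε * b ≠ η * a →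
      ∀ XL XM : ℝ, Sol XL XM → XL = -1 ∧ XM = -1) := by
  refine ⟨?_, ?_, ?_⟩
  · rw [hSol]; norm_num
  · subst hΛ
    rw [Matrix.det_fin_two_of]
    have q1 : 1 / a - η / (lamL + η * a) = lamL / (a * (lamL + η * a)) := by
      rw [div_sub_div _ _ ha hLa]; congr 1; ring
    have q2 : 1 / a - η / (lamM + η * a) = lamM / (a * (lamM + η * a)) := by
      rw [div_sub_div _ _ ha hMa]; congr 1; ring
    have q3 : 1 / b - ε / (lamL + ε * b) = lamL / (b * (lamL + ε * b)) := by
      rw [div_sub_div _ _ hb hLb]; congr 1; ring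
    have q4 : 1 / b - ε / (lamM + ε * b) = lamM / (b * (lamM + ε * b)) := by
      rw [div_sub_div _ _ hb hMb]; congr 1; ring
    rw [q1, q2, q3, q4, mul_neg, neg_mul, div_mul_div_comm, div_mul_div_comm, sub_neg_eq_add,
      neg_div', div_add_div _ _ (by simp [*]) (by simp [*]), div_eq_div_iff (by simp [*]) (by simp [*])]
    ring
  · intro hL hM hLM hba XL XM hsol
    rw [hSol] at hsol
    obtain ⟨e1, e2⟩ := hsol
    have hLa' : lamL + a * η ≠ 0 := by rw [mul_comm]; exact hLa
    have hMa' : lamM + a * η ≠ 0 := by rw [mul_comm]; exact hMa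
    have hLb' : lamL + b * ε ≠ 0 := by rw [mul_comm]; exact hLb
    have hMb' : lamM + b * ε ≠ 0 := by rw [mul_comm]; exact hMb
    field_simp at e1 e2
    have h1 : (XL + 1) * lamL * (lamM + η * a) * a = (XM + 1) * lamM * (lamL + η * a) * a := by
      linear_combination a * e1
    have h2 : (XL + 1) * lamL * (lamM + ε * b) * b = (XM + 1) * lamM * (lamL + ε * b) * b := by
      linear_combination b * e2
    have h3 : (XL + 1) * (lamL * ((ε * b - η * a) * (lamM - lamL)) * (a * b)) = 0 := by
      linear_combination b * (lamL + ε * b) * h1 - a * (lamL + η * a) * h2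
    have hXL : XL = -1 := by
      rcases mul_eq_zero.1 h3 with h | h
      · linarith
      · exfalso
        rcases mul_eq_zero.1 h with h | h
        · rcases mul_eq_zero.1 h with h | h
          · exact hL h
          rcases mul_eq_zero.1 h with h | h
          · exact hba (by linarith)
          · exact hLM (by linarith)
        · rcases mul_eq_zero.1 h with h | h
          exacts [ha h, hb h]
    have hXM : XM = -1 := by
      rw [hXL] at h1
      have h4 : (XM + 1) * (lamM * ((lamL + η * a) * a)) = 0 := by linear_combination -h1
      rcases mul_eq_zero.1 h4 with h | h
      · linarith
      · exfalso
        rcases mul_eq_zero.1 h with h | h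
        · exact hM h
        rcases mul_eq_zero.1 h with h | h
        exacts [hLa h, ha h]
    exact ⟨hXL, hXM⟩
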